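/- Let H > 1 and m = Σ_{t=0}^{L-1} H^t · 2Hd + H^L · d_in. There exist fixed matrices R_Q^{l,h}, R_K^{l,h} ∈ R^{m×d}, routing matrices R_V^{l,h} ∈ R^{m×m}, and U ∈ R^{m×d_in} such that for any target transformer parameters {W_Q^{l,h}, W_K^{l,h}, W_V^{l,h}, W_O^{l,h}}, there exists E ∈ R^{d_in×m} satisfying, for every prefix (h_1,...,h_{l-1}) ∈ [H]^{l-1} and head h_l: E R_V^{1,h_1}···R_V^{l-1,h_{l-1}} R_Q^{l,h_l} = M^{1:l-1,(h_1,...,h_{l-1})} W_Q^{l,h_l}, the analogous key equation, and for every full path E R_V^{1,h_1}···R_V^{L,h_L} U = M^{1:L,(h_1,...,h_L)}, where M^{1:t,(h_1,...,h_t)} = Π_{s=1}^t W_V^{s,h_s} W_O^{s,h_s} (empty product = identity). -/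

import Mathlib

open Matrix

/-- `wPath hs l = (W_V^{1,h_1} W_O^{1,h_1}) ⋯ (W_V^{l,h_l} W_O^{l,h_l})`
(the matrices `M^{1:l,(h_1,…,h_l)}`; empty product = identity). -/
noncomputable def wPath {din d H : ℕ}
    (WV : ℕ → Fin H → Matrix (Fin din) (Fin d) ℝ)
    (WO : ℕ → Fin H → Matrix (Fin d) (Fin din) ℝ)
    (hs : ℕ → Fin H) : ℕ → Matrix (Fin din) (Fin din) ℝ
  | 0 => 1
  | l + 1 => wPath WV WO hs l * (WV l (hs l) * WO l (hs l))

/-- `rPath hs l = R_V^{1,h_1} ⋯ R_V^{l,h_l}` (empty product = identity). -/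
noncomputable def rPath {m H : ℕ}
    (RV : ℕ → Fin H → Matrix (Fin m) (Fin m) ℝ)
    (hs : ℕ → Fin H) : ℕ → Matrix (Fin m) (Fin m) ℝ
  | 0 => 1
  | l + 1 => rPath RV hs l * RV l (hs l)

namespace Stmt7Aux

variable {H L d din : ℕ}

/-- Index type for the `m` coordinates: internal tree nodes (depth `t < L`,
prefix in `Fin (H^t)`, slot in `Fin (2*H*d)`) plus leaves. -/
abbrev Idx (H L d din : ℕ) : Type :=
  (Σ t : Fin L, Fin (H ^ (t : ℕ)) × Fin (2 * H * d)) ⊕ (Fin (H ^ L) × Fin din)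

/-- the number whose base-`H` digits (MSB first) are `hs 0, …, hs (l-1)`. -/
def pathNum (H : ℕ) (hs : ℕ → Fin H) : ℕ → ℕ
  | 0 => 0
  | l + 1 => pathNum H hs l * H + (hs l : ℕ)

lemma pathNum_lt (hH : 0 < H) (hs : ℕ → Fin H) : ∀ l, pathNum H hs l < H ^ l
  | 0 => by simp [pathNum]
  | l + 1 => by
      have h1 : pathNum H hs l + 1 ≤ H ^ l := pathNum_lt hH hs l
      have h2 : (hs l : ℕ) < H := (hs l).isLt
      simp only [pathNum, pow_succ]
      nlinarith

def condI (l : ℕ) : Idx H L d din → Prop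
  | Sum.inl ⟨t, p, _⟩ => l ≤ (t : ℕ) ∧ (p : ℕ) < H ^ ((t : ℕ) - l)
  | Sum.inr (p, _) => l ≤ L ∧ (p : ℕ) < H ^ (L - l)

instance (l : ℕ) (j : Idx H L d din) : Decidable (condI l j) :=
  match j with
  | Sum.inl ⟨t, p, _⟩ => inferInstanceAs (Decidable (l ≤ (t : ℕ) ∧ (p : ℕ) < H ^ ((t : ℕ) - l)))
  | Sum.inr (p, _) => inferInstanceAs (Decidable (l ≤ L ∧ (p : ℕ) < H ^ (L - l)))

def σI (hH : 0 < H) (hs : ℕ → Fin H) (l : ℕ) : Idx H L d din → Idx H L d din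
  | Sum.inl ⟨t, p, i⟩ =>
      Sum.inl ⟨t, ⟨(pathNum H hs l * H ^ ((t : ℕ) - l) + (p : ℕ)) % H ^ (t : ℕ),
        Nat.mod_lt _ (pow_pos hH _)⟩, i⟩
  | Sum.inr (p, j) =>
      Sum.inr (⟨(pathNum H hs l * H ^ (L - l) + (p : ℕ)) % H ^ L,
        Nat.mod_lt _ (pow_pos hH _)⟩, j)

def τI (hH : 0 < H) (l : ℕ) (h : Fin H) : Idx H L d din → Idx H L d din
  | Sum.inl ⟨t, p, i⟩ =>
      Sum.inl ⟨t, ⟨((h : ℕ) * H ^ ((t : ℕ) - (l + 1)) + (p : ℕ)) % H ^ (t : ℕ),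
        Nat.mod_lt _ (pow_pos hH _)⟩, i⟩
  | Sum.inr (p, j) =>
      Sum.inr (⟨((h : ℕ) * H ^ (L - (l + 1)) + (p : ℕ)) % H ^ L,
        Nat.mod_lt _ (pow_pos hH _)⟩, j)

-- arithmetic core
lemma arith_lt (hH : 0 < H) {l T hv p : ℕ} (hh : hv < H) (hT : l + 1 ≤ T)
    (hp : p < H ^ (T - (l + 1))) :
    hv * H ^ (T - (l + 1)) + p < H ^ (T - l) ∧ hv * H ^ (T - (l + 1)) + p < H ^ T := by
  have h1 : hv * H ^ (T - (l + 1)) + p < (hv + 1) * H ^ (T - (l + 1)) := by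
    have := Nat.add_lt_add_left hp (hv * H ^ (T - (l + 1)))
    simpa [add_mul] using this
  have h2 : (hv + 1) * H ^ (T - (l + 1)) ≤ H * H ^ (T - (l + 1)) :=
    Nat.mul_le_mul_right _ hh
  have h3 : H * H ^ (T - (l + 1)) = H ^ (T - l) := by
    rw [← pow_succ']
    congr 1
    omega
  have h4 : H ^ (T - l) ≤ H ^ T := Nat.pow_le_pow_right hH (Nat.sub_le _ _)
  constructor <;> omega

lemma condI_zero (j : Idx H L d din) : condI 0 j := by
  rcases j with ⟨t, p, i⟩ | ⟨p, j⟩ <;> simp [condI, p.isLt]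

lemma σI_zero (hH : 0 < H) (hs : ℕ → Fin H) (j : Idx H L d din) : σI hH hs 0 j = j := by
  rcases j with ⟨t, p, i⟩ | ⟨p, j⟩ <;>
    simp [σI, pathNum, Nat.mod_eq_of_lt p.isLt]

lemma condI_τ (hH : 0 < H) {l : ℕ} (h : Fin H) {j : Idx H L d din}
    (hc : condI (l + 1) j) : condI l (τI hH l h j) := by
  rcases j with ⟨t, p, i⟩ | ⟨p, j⟩ <;>
    obtain ⟨h1, h2⟩ := hc
  · obtain ⟨ha, hb⟩ := arith_lt hH h.isLt h1 h2
    exact ⟨by omega, by simpa [τI, Nat.mod_eq_of_lt hb] using ha⟩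
  · obtain ⟨ha, hb⟩ := arith_lt hH h.isLt h1 h2
    exact ⟨by omega, by simpa [τI, Nat.mod_eq_of_lt hb] using ha⟩

lemma arith_sigma_tau (hH : 0 < H) {l T hv p c : ℕ} (hh : hv < H) (hT : l + 1 ≤ T)
    (hp : p < H ^ (T - (l + 1))) :
    (c * H ^ (T - l) + (hv * H ^ (T - (l + 1)) + p) % H ^ T) % H ^ T
      = ((c * H + hv) * H ^ (T - (l + 1)) + p) % H ^ T := by
  obtain ⟨-, hb⟩ := arith_lt hH hh hT hp
  rw [Nat.mod_eq_of_lt hb]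
  congr 1
  have h3 : H ^ (T - l) = H ^ (T - (l + 1)) * H := by
    rw [← pow_succ]
    congr 1
    omega
  rw [h3]
  ring

lemma σI_τ (hH : 0 < H) (hs : ℕ → Fin H) {l : ℕ} {j : Idx H L d din}
    (hc : condI (l + 1) j) :
    σI hH hs l (τI hH l (hs l) j) = σI hH hs (l + 1) j := by
  rcases j with ⟨t, p, i⟩ | ⟨p, j⟩ <;> obtain ⟨h1, h2⟩ := hc <;>
    simp only [σI, τI, Sum.inl.injEq, Sum.inr.injEq, Sigma.mk.inj_iff, Prod.mk.injEq,
      heq_eq_eq, Fin.mk.injEq, true_and, and_true] <;>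
    exact arith_sigma_tau hH (hs l).isLt h1 h2

/-- products of matrices: generic version of `rPath` over any index type. -/
noncomputable def rPathG {n : Type} [Fintype n] [DecidableEq n]
    (RV : ℕ → Fin H → Matrix n n ℝ) (hs : ℕ → Fin H) : ℕ → Matrix n n ℝ
  | 0 => 1
  | l + 1 => rPathG RV hs l * RV l (hs l)

noncomputable def RVI (hH : 0 < H) (l : ℕ) (h : Fin H) :
    Matrix (Idx H L d din) (Idx H L d din) ℝ :=
  fun k j => if condI (l + 1) j ∧ k = τI hH l h j then 1 else 0

lemma rPathG_apply (hH : 0 < H) (hs : ℕ → Fin H) :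
    ∀ (l : ℕ) (k j : Idx H L d din),
      rPathG (RVI hH) hs l k j = if condI l j ∧ k = σI hH hs l j then 1 else 0
  | 0, k, j => by
      simp [rPathG, Matrix.one_apply, condI_zero j, σI_zero hH hs j]
  | l + 1, k, j => by
      rw [show rPathG (RVI hH) hs (l + 1) = rPathG (RVI hH) hs l * RVI hH l (hs l) from rfl,
        Matrix.mul_apply]
      by_cases hc : condI (l + 1) j
      · rw [Finset.sum_eq_single (τI hH l (hs l) j)]
        · rw [rPathG_apply hH hs l, RVI]
          simp [hc, condI_τ hH (hs l) hc, σI_τ hH hs hc]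
        · intro b _ hb
          simp [RVI, hb]
        · intro habs
          exact absurd (Finset.mem_univ _) habs
      · simp [RVI, hc]

/-- the `M`-products, indexed by the base-`H` numeral of the path. -/
noncomputable def mprod (hH : 0 < H)
    (WV : ℕ → Fin H → Matrix (Fin din) (Fin d) ℝ)
    (WO : ℕ → Fin H → Matrix (Fin d) (Fin din) ℝ) :
    ℕ → ℕ → Matrix (Fin din) (Fin din) ℝ
  | 0, _ => 1
  | t + 1, p =>
      mprod hH WV WO t (p / H) *
        (WV t ⟨p % H, Nat.mod_lt _ hH⟩ * WO t ⟨p % H, Nat.mod_lt _ hH⟩)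

lemma mprod_pathNum (hH : 0 < H)
    (WV : ℕ → Fin H → Matrix (Fin din) (Fin d) ℝ)
    (WO : ℕ → Fin H → Matrix (Fin d) (Fin din) ℝ) (hs : ℕ → Fin H) :
    ∀ l, mprod hH WV WO l (pathNum H hs l) = wPath WV WO hs l
  | 0 => rfl
  | l + 1 => by
      have hdiv : (pathNum H hs l * H + (hs l : ℕ)) / H = pathNum H hs l := by
        rw [mul_comm, Nat.mul_add_div hH, Nat.div_eq_of_lt (hs l).isLt, add_zero]
      have hmod : (pathNum H hs l * H + (hs l : ℕ)) % H = (hs l : ℕ) := by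
        rw [mul_comm, Nat.mul_add_mod, Nat.mod_eq_of_lt (hs l).isLt]
      show mprod hH WV WO (l+1) (pathNum H hs (l+1)) = wPath WV WO hs (l+1)
      rw [show pathNum H hs (l+1) = pathNum H hs l * H + (hs l : ℕ) from rfl]
      rw [show mprod hH WV WO (l+1) (pathNum H hs l * H + (hs l : ℕ)) =
        mprod hH WV WO l ((pathNum H hs l * H + (hs l : ℕ)) / H) *
          (WV l ⟨(pathNum H hs l * H + (hs l : ℕ)) % H, Nat.mod_lt _ hH⟩ *
           WO l ⟨(pathNum H hs l * H + (hs l : ℕ)) % H, Nat.mod_lt _ hH⟩) from rfl]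
      rw [show wPath WV WO hs (l+1) = wPath WV WO hs l * (WV l (hs l) * WO l (hs l)) from rfl]
      have hfin : (⟨(pathNum H hs l * H + (hs l : ℕ)) % H, Nat.mod_lt _ hH⟩ : Fin H) = hs l :=
        Fin.ext hmod
      rw [hdiv, hfin, mprod_pathNum hH WV WO hs l]

/-- The embedding matrix. -/
noncomputable def EI (hH : 0 < H)
    (WQ WK WV : ℕ → Fin H → Matrix (Fin din) (Fin d) ℝ)
    (WO : ℕ → Fin H → Matrix (Fin d) (Fin din) ℝ) :
    Matrix (Fin din) (Idx H L d din) ℝ :=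
  fun a j =>
    match j with
    | Sum.inl ⟨t, p, i⟩ =>
        have hd : 0 < d := by
          have h1 : 0 < 2 * H * d := lt_of_le_of_lt (Nat.zero_le _) i.isLt
          rcases Nat.eq_zero_or_pos d with h | h
          · subst h; simp at h1
          · exact h
        if (i : ℕ) < H * d then
          (mprod hH WV WO (t : ℕ) (p : ℕ) *
            WQ (t : ℕ) ⟨(i : ℕ) / d % H, Nat.mod_lt _ hH⟩) a ⟨(i : ℕ) % d, Nat.mod_lt _ hd⟩
        else
          (mprod hH WV WO (t : ℕ) (p : ℕ) *
            WK (t : ℕ) ⟨((i : ℕ) - H * d) / d % H, Nat.mod_lt _ hH⟩) a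
              ⟨((i : ℕ) - H * d) % d, Nat.mod_lt _ hd⟩
    | Sum.inr (p, j') => mprod hH WV WO L (p : ℕ) a j'

lemma E_rPath_apply (hH : 0 < H)
    (WQ WK WV : ℕ → Fin H → Matrix (Fin din) (Fin d) ℝ)
    (WO : ℕ → Fin H → Matrix (Fin d) (Fin din) ℝ) (hs : ℕ → Fin H) (l : ℕ)
    (a : Fin din) (j : Idx H L d din) :
    ((EI (L := L) hH WQ WK WV WO) * rPathG (n := Idx H L d din) (RVI hH) hs l) a j
      = if condI l j then EI hH WQ WK WV WO a (σI hH hs l j) else 0 := by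
  rw [Matrix.mul_apply]
  by_cases hc : condI l j
  · rw [Finset.sum_eq_single (σI hH hs l j)]
    · rw [rPathG_apply hH hs l]
      simp [hc]
    · intro b _ hb
      rw [rPathG_apply hH hs l]
      simp [hb]
    · intro habs
      exact absurd (Finset.mem_univ _) habs
  · simp only [rPathG_apply hH hs l, hc, false_and, if_neg, if_false, mul_zero,
      Finset.sum_const_zero]

noncomputable def RQI (hH : 0 < H) (l : ℕ) (h : Fin H) :
    Matrix (Idx H L d din) (Fin d) ℝ :=
  fun k j =>
    if hl : l < L then
      (if k = Sum.inl ⟨⟨l, hl⟩, ⟨0, pow_pos hH l⟩,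
          ⟨((h : ℕ) * d + (j : ℕ)) % (2 * H * d),
            Nat.mod_lt _ (Nat.mul_pos (Nat.mul_pos (by norm_num) hH) j.pos)⟩⟩ then 1 else 0)
    else 0

noncomputable def RKI (hH : 0 < H) (l : ℕ) (h : Fin H) :
    Matrix (Idx H L d din) (Fin d) ℝ :=
  fun k j =>
    if hl : l < L then
      (if k = Sum.inl ⟨⟨l, hl⟩, ⟨0, pow_pos hH l⟩,
          ⟨(H * d + ((h : ℕ) * d + (j : ℕ))) % (2 * H * d),
            Nat.mod_lt _ (Nat.mul_pos (Nat.mul_pos (by norm_num) hH) j.pos)⟩⟩ then 1 else 0)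
    else 0

noncomputable def UI (hH : 0 < H) : Matrix (Idx H L d din) (Fin din) ℝ :=
  fun k j => if k = Sum.inr (⟨0, pow_pos hH L⟩, j) then 1 else 0

lemma hd_lt (h : Fin H) (j : Fin d) : (h : ℕ) * d + (j : ℕ) < H * d := by
  have h1 : (h : ℕ) + 1 ≤ H := h.isLt
  have h2 : ((h : ℕ) + 1) * d ≤ H * d := Nat.mul_le_mul_right _ h1
  have h3 : (j : ℕ) < d := j.isLt
  calc (h : ℕ) * d + (j : ℕ) < (h : ℕ) * d + d := by omega
    _ = ((h : ℕ) + 1) * d := by ring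
    _ ≤ H * d := h2


lemma EQ_eval (hH : 0 < H)
    (WQ WK WV : ℕ → Fin H → Matrix (Fin din) (Fin d) ℝ)
    (WO : ℕ → Fin H → Matrix (Fin d) (Fin din) ℝ) (hs : ℕ → Fin H) {l : ℕ}
    (hl : l < L) (h : Fin H) :
    (EI (L := L) hH WQ WK WV WO) * rPathG (n := Idx H L d din) (RVI hH) hs l * RQI hH l h
      = wPath WV WO hs l * WQ l h := by
  ext a j
  have hd : 0 < d := j.pos
  have hlt2 : (h : ℕ) * d + (j : ℕ) < 2 * H * d := by
    have h1 := hd_lt h j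
    have h2 : H * d ≤ 2 * H * d := by nlinarith
    omega
  have hpos2 : 0 < 2 * H * d := Nat.mul_pos (Nat.mul_pos (by norm_num) hH) hd
  set tgt : Idx H L d din := Sum.inl ⟨⟨l, hl⟩, ⟨0, pow_pos hH l⟩,
      ⟨((h : ℕ) * d + (j : ℕ)) % (2 * H * d), Nat.mod_lt _ hpos2⟩⟩ with htgt
  erw [Matrix.mul_apply]; rw [Finset.sum_eq_single tgt]
  · have h1 : RQI (din := din) hH l h tgt j = 1 := by
      rw [RQI, dif_pos hl, if_pos rfl]
    rw [h1, mul_one, E_rPath_apply]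
    have hcond : condI l tgt := by
      constructor
      · exact le_refl l
      · simp [Nat.sub_self]
    rw [if_pos hcond]
    simp only [htgt, σI, EI]
    have e1 : ((h : ℕ) * d + (j : ℕ)) % (2 * H * d) = (h : ℕ) * d + (j : ℕ) :=
      Nat.mod_eq_of_lt hlt2
    have e2 : (pathNum H hs l * H ^ (l - l) + 0) % H ^ l = pathNum H hs l := by
      simp [Nat.sub_self, Nat.mod_eq_of_lt (pathNum_lt hH hs l)]
    have g1 : ((h : ℕ) * d + (j : ℕ)) / d % H = (h : ℕ) := by
      rw [mul_comm (h : ℕ) d, Nat.mul_add_div hd, Nat.div_eq_of_lt j.isLt, add_zero,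
        Nat.mod_eq_of_lt h.isLt]
    have g2 : ((h : ℕ) * d + (j : ℕ)) % d = (j : ℕ) := by
      rw [mul_comm (h : ℕ) d, Nat.mul_add_mod, Nat.mod_eq_of_lt j.isLt]
    simp only [e1, e2]
    rw [if_pos (hd_lt h j)]
    simp only [g1, g2, Fin.eta]
    rw [mprod_pathNum hH WV WO hs l]
  · intro b _ hb
    have h0 : RQI (din := din) hH l h b j = 0 := by
      rw [RQI, dif_pos hl, if_neg hb]
    rw [h0, mul_zero]
  · intro habs
    exact absurd (Finset.mem_univ _) habs


lemma EK_eval (hH : 0 < H)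
    (WQ WK WV : ℕ → Fin H → Matrix (Fin din) (Fin d) ℝ)
    (WO : ℕ → Fin H → Matrix (Fin d) (Fin din) ℝ) (hs : ℕ → Fin H) {l : ℕ}
    (hl : l < L) (h : Fin H) :
    (EI (L := L) hH WQ WK WV WO) * rPathG (n := Idx H L d din) (RVI hH) hs l * RKI hH l h
      = wPath WV WO hs l * WK l h := by
  ext a j
  have hd : 0 < d := j.pos
  have hdd : 2 * H * d = H * d + H * d := by ring
  have hlt2 : H * d + ((h : ℕ) * d + (j : ℕ)) < 2 * H * d := by
    have h1 := hd_lt h j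
    omega
  have hpos2 : 0 < 2 * H * d := Nat.mul_pos (Nat.mul_pos (by norm_num) hH) hd
  set tgt : Idx H L d din := Sum.inl ⟨⟨l, hl⟩, ⟨0, pow_pos hH l⟩,
      ⟨(H * d + ((h : ℕ) * d + (j : ℕ))) % (2 * H * d), Nat.mod_lt _ hpos2⟩⟩ with htgt
  erw [Matrix.mul_apply]; rw [Finset.sum_eq_single tgt]
  · have h1 : RKI (din := din) hH l h tgt j = 1 := by
      rw [RKI, dif_pos hl, if_pos rfl]
    rw [h1, mul_one, E_rPath_apply]
    have hcond : condI l tgt := by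
      constructor
      · exact le_refl l
      · simp [Nat.sub_self]
    rw [if_pos hcond]
    simp only [htgt, σI, EI]
    have e1 : (H * d + ((h : ℕ) * d + (j : ℕ))) % (2 * H * d)
        = H * d + ((h : ℕ) * d + (j : ℕ)) := Nat.mod_eq_of_lt hlt2
    have e2 : (pathNum H hs l * H ^ (l - l) + 0) % H ^ l = pathNum H hs l := by
      simp [Nat.sub_self, Nat.mod_eq_of_lt (pathNum_lt hH hs l)]
    have e3 : H * d + ((h : ℕ) * d + (j : ℕ)) - H * d = (h : ℕ) * d + (j : ℕ) := by omega
    have g1 : ((h : ℕ) * d + (j : ℕ)) / d % H = (h : ℕ) := by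
      rw [mul_comm (h : ℕ) d, Nat.mul_add_div hd, Nat.div_eq_of_lt j.isLt, add_zero,
        Nat.mod_eq_of_lt h.isLt]
    have g2 : ((h : ℕ) * d + (j : ℕ)) % d = (j : ℕ) := by
      rw [mul_comm (h : ℕ) d, Nat.mul_add_mod, Nat.mod_eq_of_lt j.isLt]
    simp only [e1, e2]
    rw [if_neg (by omega)]
    simp only [e3, g1, g2, Fin.eta]
    rw [mprod_pathNum hH WV WO hs l]
  · intro b _ hb
    have h0 : RKI (din := din) hH l h b j = 0 := by
      rw [RKI, dif_pos hl, if_neg hb]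
    rw [h0, mul_zero]
  · intro habs
    exact absurd (Finset.mem_univ _) habs

lemma U_eval (hH : 0 < H)
    (WQ WK WV : ℕ → Fin H → Matrix (Fin din) (Fin d) ℝ)
    (WO : ℕ → Fin H → Matrix (Fin d) (Fin din) ℝ) (hs : ℕ → Fin H) :
    (EI (L := L) hH WQ WK WV WO) * rPathG (n := Idx H L d din) (RVI hH) hs L
        * UI (d := d) hH
      = wPath WV WO hs L := by
  ext a j
  set tgt : Idx H L d din := Sum.inr (⟨0, pow_pos hH L⟩, j) with htgt
  erw [Matrix.mul_apply]; rw [Finset.sum_eq_single tgt]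
  · have h1 : UI (d := d) hH tgt j = 1 := by
      rw [UI, if_pos rfl]
    rw [h1, mul_one, E_rPath_apply]
    have hcond : condI L tgt := by
      constructor
      · exact le_refl L
      · simp [Nat.sub_self]
    rw [if_pos hcond]
    simp only [htgt, σI, EI]
    have e2 : (pathNum H hs L * H ^ (L - L) + 0) % H ^ L = pathNum H hs L := by
      simp [Nat.sub_self, Nat.mod_eq_of_lt (pathNum_lt hH hs L)]
    simp only [e2]
    rw [mprod_pathNum hH WV WO hs L]
  · intro b _ hb
    have h0 : UI (d := d) hH b j = 0 := by
      rw [UI, if_neg hb]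
    rw [h0, mul_zero]
  · intro habs
    exact absurd (Finset.mem_univ _) habs

lemma card_Idx (hm : m = (∑ t ∈ Finset.range L, H ^ t) * (2 * H * d) + H ^ L * din) :
    Fintype.card (Idx H L d din) = m := by
  rw [hm]
  simp only [Idx, Fintype.card_sum, Fintype.card_sigma, Fintype.card_prod, Fintype.card_fin]
  rw [Fin.sum_univ_eq_sum_range (fun t => H ^ t * (2 * H * d)), ← Finset.sum_mul]


lemma rPath_submatrix {m : ℕ} (e : Fin m ≃ Idx H L d din) (hH : 0 < H) (hs : ℕ → Fin H) :
    ∀ l, rPath (fun l h => (RVI (L := L) (d := d) (din := din) hH l h).submatrix e e) hs l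
      = (rPathG (RVI hH) hs l).submatrix e e
  | 0 => by
      show (1 : Matrix (Fin m) (Fin m) ℝ) = (1 : Matrix (Idx H L d din) _ ℝ).submatrix e e
      rw [Matrix.submatrix_one_equiv]
  | l + 1 => by
      simp only [rPath, rPathG]
      rw [rPath_submatrix e hH hs l, Matrix.submatrix_mul_equiv]

end Stmt7Aux

open Stmt7Aux in
/-- sparse multi-head universal transformer: for `H > 1` and
`m = Σ_{t=0}^{L-1} H^t·2Hd + H^L·d_in` there exist fixed matrices
`R_Q^{l,h}, R_K^{l,h}, R_V^{l,h}, U` such that for any target transformer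
parameters there exists an embedding `E` matching, along every head path, the
query and key products and the full value path `M^{1:L,(h_1,…,h_L)}`. -/
theorem stmt7 {H L d din m : ℕ} (hH : 1 < H)
    (hm : m = (∑ t ∈ Finset.range L, H ^ t) * (2 * H * d) + H ^ L * din) :
    ∃ (RQ RK : ℕ → Fin H → Matrix (Fin m) (Fin d) ℝ)
      (RV : ℕ → Fin H → Matrix (Fin m) (Fin m) ℝ)
      (U : Matrix (Fin m) (Fin din) ℝ),
      ∀ (WQ WK WV : ℕ → Fin H → Matrix (Fin din) (Fin d) ℝ)
        (WO : ℕ → Fin H → Matrix (Fin d) (Fin din) ℝ),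
        ∃ E : Matrix (Fin din) (Fin m) ℝ,
          (∀ (hs : ℕ → Fin H), ∀ l < L,
            E * rPath RV hs l * RQ l (hs l) = wPath WV WO hs l * WQ l (hs l) ∧
            E * rPath RV hs l * RK l (hs l) = wPath WV WO hs l * WK l (hs l)) ∧
          ∀ (hs : ℕ → Fin H),
            E * rPath RV hs L * U = wPath WV WO hs L := by
  have hH0 : 0 < H := by omega
  have hcard : Fintype.card (Fin m) = Fintype.card (Idx H L d din) := by
    rw [Fintype.card_fin, card_Idx hm]
  let e : Fin m ≃ Idx H L d din := Fintype.equivOfCardEq hcard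
  refine ⟨fun l h => (RQI hH0 l h).submatrix e id,
          fun l h => (RKI hH0 l h).submatrix e id,
          fun l h => (RVI hH0 l h).submatrix e e,
          (UI hH0).submatrix e id, ?_⟩
  intro WQ WK WV WO
  refine ⟨(EI hH0 WQ WK WV WO).submatrix id e, ?_, ?_⟩
  · intro hs l hl
    constructor
    · rw [rPath_submatrix e hH0 hs l, Matrix.submatrix_mul_equiv,
        Matrix.submatrix_mul_equiv, Matrix.submatrix_id_id]
      exact EQ_eval hH0 WQ WK WV WO hs hl (hs l)
    · rw [rPath_submatrix e hH0 hs l, Matrix.submatrix_mul_equiv,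
        Matrix.submatrix_mul_equiv, Matrix.submatrix_id_id]
      exact EK_eval hH0 WQ WK WV WO hs hl (hs l)
  · intro hs
    rw [rPath_submatrix e hH0 hs L, Matrix.submatrix_mul_equiv,
      Matrix.submatrix_mul_equiv, Matrix.submatrix_id_id]
    exact U_eval hH0 WQ WK WV WO hs
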